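/- Let ρ ∈ [0,ρ₀], let d* ∈ X be a minimizer of J(·,ρ) over X, and let u* be a dual-feasible point with D(u*,ρ) = J(d*,ρ) (strong duality). Then the complementarity measure vanishes: χ(d*,u*) = 0. -/

import Mathlib

open scoped RealInnerProductSpace
open Finset

noncomputable section

/-- `ℝⁿ` with the Euclidean norm. -/
abbrev Evec (n : ℕ) : Type := EuclideanSpace ℝ (Fin n)

variable {n m : ℕ}

/-- Apply a matrix to a Euclidean vector. -/
def matApply (M : Matrix (Fin n) (Fin n) ℝ) (x : Evec n) : Evec n := Matrix.toEuclideanLin M x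

/-- ℓ2 operator norm of a matrix. -/
def opNorm (M : Matrix (Fin n) (Fin n) ℝ) : ℝ :=
  ‖(LinearMap.toContinuousLinearMap (Matrix.toEuclideanLin M))‖

/-- `H_ρ := ρ H_f + H_0`. -/
def Hmat (Hf H0 : Matrix (Fin n) (Fin n) ℝ) (ρ : ℝ) : Matrix (Fin n) (Fin n) ℝ := ρ • Hf + H0

/-- `l(d,0) = Σ_{i≤m̄} |⟨aⁱ,d⟩+bᵢ| + Σ_{i>m̄} max(⟨aⁱ,d⟩+bᵢ,0)` (indices `i.val < mbar` are
the equality constraints). Note `lpen mbar a b 0 = J⁰`. -/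
def lpen (mbar : ℕ) (a : Fin m → Evec n) (b : Fin m → ℝ) (d : Evec n) : ℝ :=
  ∑ i : Fin m, if (i : ℕ) < mbar then |⟪a i, d⟫ + b i| else max (⟪a i, d⟫ + b i) 0

/-- `J(d,ρ) = ρ⟨g,d⟩ + ½⟨d,H_ρ d⟩ + l(d,0)`. -/
def Jval (mbar : ℕ) (g : Evec n) (a : Fin m → Evec n) (b : Fin m → ℝ)
    (Hf H0 : Matrix (Fin n) (Fin n) ℝ) (ρ : ℝ) (d : Evec n) : ℝ :=
  ρ * ⟪g, d⟫ + (1/2) * ⟪d, matApply (Hmat Hf H0 ρ) d⟫ + lpen mbar a b d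

/-- `āⁱ := aⁱ/‖aⁱ‖`. -/
def abar (a : Fin m → Evec n) (i : Fin m) : Evec n := ‖a i‖⁻¹ • a i

/-- `b̄ᵢ := bᵢ/‖aⁱ‖`. -/
def bbar (a : Fin m → Evec n) (b : Fin m → ℝ) (i : Fin m) : ℝ := b i / ‖a i‖

/-- `Cᵢ`: hyperplane for equality constraints, half-space for inequality constraints. -/
def Cset (mbar : ℕ) (a : Fin m → Evec n) (b : Fin m → ℝ) (i : Fin m) : Set (Evec n) :=
  if (i : ℕ) < mbar then {d | ⟪abar a i, d⟫ + bbar a b i = 0}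
  else {d | ⟪abar a i, d⟫ + bbar a b i ≤ 0}

/-- Real-valued support function `δ*(y|C) = sup_{z∈C} ⟨y,z⟫` (via `sSup`). -/
def suppFn (y : Evec n) (C : Set (Evec n)) : ℝ := sSup ((fun z => ⟪y, z⟫) '' C)

/-- Dual feasibility: `u⁰ + Σᵢ ‖aⁱ‖ uⁱ + u^{m+1} = 0` and `‖uⁱ‖ ≤ 1` for `i = 1,…,m`. -/
def DualFeasible (a : Fin m → Evec n) (u0 : Evec n) (u : Fin m → Evec n) (um1 : Evec n) : Prop :=
  (u0 + ∑ i, ‖a i‖ • u i + um1 = 0) ∧ ∀ i, ‖u i‖ ≤ 1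

/-- Real-valued dual objective
`D(u,ρ) = -½⟨u⁰-ρg, H_ρ⁻¹(u⁰-ρg)⟩ - Σᵢ ‖aⁱ‖ δ*(uⁱ|Cᵢ) - δ*(u^{m+1}|X)`. -/
def Dval (mbar : ℕ) (g : Evec n) (a : Fin m → Evec n) (b : Fin m → ℝ)
    (Hf H0 : Matrix (Fin n) (Fin n) ℝ) (X : Set (Evec n)) (ρ : ℝ)
    (u0 : Evec n) (u : Fin m → Evec n) (um1 : Evec n) : ℝ :=
  -(1/2) * ⟪u0 - ρ • g, matApply (Hmat Hf H0 ρ)⁻¹ (u0 - ρ • g)⟫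
    - ∑ i, ‖a i‖ * suppFn (u i) (Cset mbar a b i)
    - suppFn um1 X

/-- Extended-real-valued support function. -/
def suppFnE (y : Evec n) (C : Set (Evec n)) : EReal :=
  ⨆ z ∈ C, ((⟪y, z⟫ : ℝ) : EReal)

/-- Extended-real-valued dual objective (value in `ℝ ∪ {±∞}`; it is `-∞` when a support
function is `+∞`). -/
def DvalE (mbar : ℕ) (g : Evec n) (a : Fin m → Evec n) (b : Fin m → ℝ)
    (Hf H0 : Matrix (Fin n) (Fin n) ℝ) (X : Set (Evec n)) (ρ : ℝ)
    (u0 : Evec n) (u : Fin m → Evec n) (um1 : Evec n) : EReal :=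
  ((-(1/2) * ⟪u0 - ρ • g, matApply (Hmat Hf H0 ρ)⁻¹ (u0 - ρ • g)⟫ : ℝ) : EReal)
    - ∑ i, (‖a i‖ : EReal) * suppFnE (u i) (Cset mbar a b i)
    - suppFnE um1 X

/-- `ζᵢ(u) := ⟨uⁱ, āⁱ⟩`. -/
def zeta (a : Fin m → Evec n) (u : Fin m → Evec n) (i : Fin m) : ℝ := ⟪u i, abar a i⟫

/-- The complementarity measure
`χ(d,u) = Σ_{i ∈ E₊(d) ∪ I₊(d)} (1−ζᵢ(u))‖aⁱ‖ dist(d,Cᵢ) + Σ_{i ∈ E₋(d)} (1+ζᵢ(u))‖aⁱ‖ dist(d,Cᵢ)`. -/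
def chiMeas (mbar : ℕ) (a : Fin m → Evec n) (b : Fin m → ℝ)
    (d : Evec n) (u : Fin m → Evec n) : ℝ :=
  ∑ i : Fin m,
    if (i : ℕ) < mbar then
      (if 0 < ⟪abar a i, d⟫ + bbar a b i then
          (1 - zeta a u i) * (‖a i‖ * Metric.infDist d (Cset mbar a b i))
        else if ⟪abar a i, d⟫ + bbar a b i < 0 then
          (1 + zeta a u i) * (‖a i‖ * Metric.infDist d (Cset mbar a b i))
        else 0)
    else
      (if 0 < ⟪abar a i, d⟫ + bbar a b i then
          (1 - zeta a u i) * (‖a i‖ * Metric.infDist d (Cset mbar a b i))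
        else 0)

section Helpers6
open Matrix

variable {n m : ℕ}

lemma inner_matApply' (M : Matrix (Fin n) (Fin n) ℝ) (x y : Evec n) :
    ⟪x, matApply M y⟫ = (WithLp.equiv 2 _ x) ⬝ᵥ (M *ᵥ (WithLp.equiv 2 _ y)) := by
  simp [matApply, Matrix.toEuclideanLin_apply, PiLp.inner_apply]
  simp only [dotProduct]
  exact Finset.sum_congr rfl fun _ _ => mul_comm _ _

lemma matApply_posdef' (M : Matrix (Fin n) (Fin n) ℝ) (h : M.PosDef) (x : Evec n) :
    0 ≤ ⟪x, matApply M x⟫ := by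
  rcases eq_or_ne x 0 with rfl|hx
  · simp [matApply]
  · rw [inner_matApply']
    have := h.dotProduct_mulVec_pos (x := WithLp.equiv 2 _ x) (by simpa using hx)
    simpa using this.le

lemma matApply_symm' (M : Matrix (Fin n) (Fin n) ℝ) (h : M.IsHermitian) (x y : Evec n) :
    ⟪matApply M x, y⟫ = ⟪x, matApply M y⟫ :=
  (Matrix.isHermitian_iff_isSymmetric.1 h) x y

lemma matApply_inv' (M : Matrix (Fin n) (Fin n) ℝ) (h : M.PosDef) (x : Evec n) :
    matApply M (matApply M⁻¹ x) = x := by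
  simp only [matApply, Matrix.toEuclideanLin_apply, Equiv.apply_symm_apply,
    Matrix.mulVec_mulVec, Matrix.mul_nonsing_inv _ (isUnit_iff_ne_zero.2 h.det_pos.ne'),
    Matrix.one_mulVec]

lemma matApply_sub' (M : Matrix (Fin n) (Fin n) ℝ) (x y : Evec n) :
    matApply M (x - y) = matApply M x - matApply M y := by
  simp [matApply]

/-- key quadratic inequality -/
lemma quad_ineq' (M : Matrix (Fin n) (Fin n) ℝ) (h : M.PosDef) (w d : Evec n) :
    -(1/2) * ⟪w, matApply M⁻¹ w⟫ ≤ (1/2) * ⟪d, matApply M d⟫ - ⟪w, d⟫ := by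
  set v := d - matApply M⁻¹ w with hv
  have h1 : (0:ℝ) ≤ ⟪v, matApply M v⟫ := matApply_posdef' M h v
  have h2 : matApply M (matApply M⁻¹ w) = w := matApply_inv' M h w
  have hsym := matApply_symm' M h.1
  have h3 : ⟪v, matApply M v⟫
      = ⟪d, matApply M d⟫ - 2*⟪w, d⟫ + ⟪w, matApply M⁻¹ w⟫ := by
    rw [hv, matApply_sub', inner_sub_left, inner_sub_right, inner_sub_right, h2,
      ← hsym (matApply M⁻¹ w) d, h2, real_inner_comm d w,
      real_inner_comm (matApply M⁻¹ w) w]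
    ring
  nlinarith [h1, h3]

lemma dist_lower' (e d y : Evec n) (he : ‖e‖ = 1) : ⟪e, d - y⟫ ≤ dist d y := by
  calc ⟪e, d - y⟫ ≤ ‖e‖ * ‖d - y‖ := real_inner_le_norm e (d - y)
    _ = dist d y := by rw [he, one_mul, dist_eq_norm]

lemma infDist_hyper' (e d : Evec n) (he : ‖e‖ = 1) (c : ℝ) :
    Metric.infDist d {x : Evec n | ⟪e, x⟫ + c = 0} = |⟪e, d⟫ + c| := by
  have hee : ⟪e, e⟫ = (1:ℝ) := by
    rw [real_inner_self_eq_norm_sq, he]; norm_num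
  set s := ⟪e, d⟫ + c with hs
  have hmem : d - s • e ∈ {x : Evec n | ⟪e, x⟫ + c = 0} := by
    show ⟪e, d - s • e⟫ + c = 0
    rw [inner_sub_right, real_inner_smul_right, hee, mul_one]; rw [hs]; ring
  refine le_antisymm ?_ ?_
  · calc Metric.infDist d _ ≤ dist d (d - s • e) := Metric.infDist_le_dist_of_mem hmem
      _ = |s| := by rw [dist_eq_norm, sub_sub_cancel, norm_smul, he, mul_one, Real.norm_eq_abs]
  · by_contra h
    push_neg at h
    obtain ⟨y, hy, hlt⟩ := (Metric.infDist_lt_iff ⟨_, hmem⟩).1 h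
    have h1 : ⟪e, d - y⟫ = s := by
      rw [inner_sub_right]; simp only [Set.mem_setOf_eq] at hy; linarith
    have h2 : ⟪e, y - d⟫ = -s := by rw [← neg_sub, inner_neg_right, h1]
    have := dist_lower' e d y he
    have := dist_lower' e y d he
    rw [dist_comm y d] at this
    cases abs_cases s with
    | inl hc => linarith [dist_lower' e d y he]
    | inr hc => linarith [dist_lower' e y d he]

lemma infDist_half' (e d : Evec n) (he : ‖e‖ = 1) (c : ℝ) :
    Metric.infDist d {x : Evec n | ⟪e, x⟫ + c ≤ 0} = max (⟪e, d⟫ + c) 0 := by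
  have hee : ⟪e, e⟫ = (1:ℝ) := by
    rw [real_inner_self_eq_norm_sq, he]; norm_num
  set s := ⟪e, d⟫ + c with hs
  set t := max s 0 with ht
  have hmem : d - t • e ∈ {x : Evec n | ⟪e, x⟫ + c ≤ 0} := by
    simp only [Set.mem_setOf_eq, inner_sub_right, real_inner_smul_right, hee, mul_one]
    have : s - t ≤ 0 := by simp [ht, le_max_iff]
    linarith
  refine le_antisymm ?_ ?_
  · calc Metric.infDist d _ ≤ dist d (d - t • e) := Metric.infDist_le_dist_of_mem hmem
      _ = t := by
          rw [dist_eq_norm, sub_sub_cancel, norm_smul, he, mul_one, Real.norm_eq_abs,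
            abs_of_nonneg (le_max_right _ _)]
  · by_contra h
    push_neg at h
    obtain ⟨y, hy, hlt⟩ := (Metric.infDist_lt_iff ⟨_, hmem⟩).1 h
    simp only [Set.mem_setOf_eq] at hy
    have h1 : s ≤ ⟪e, d - y⟫ := by rw [inner_sub_right]; linarith
    have h2 := dist_lower' e d y he
    have h3 : (0:ℝ) ≤ dist d y := dist_nonneg
    have : t ≤ dist d y := by
      rcases max_cases s 0 with ⟨h4, _⟩ | ⟨h4, _⟩ <;> rw [ht, h4] <;> linarith
    linarith

lemma ereal_mul_le' {c r : ℝ} (hc : 0 < c) {S : EReal} (h : (r : EReal) ≤ S) :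
    ((c * r : ℝ) : EReal) ≤ (c : EReal) * S := by
  induction S using EReal.rec with
  | bot => simp at h
  | coe x =>
      rw [EReal.coe_mul]
      have : r ≤ x := by exact_mod_cast h
      exact_mod_cast mul_le_mul_of_nonneg_left this hc.le
  | top =>
      rw [EReal.coe_mul_top_of_pos hc]
      exact le_top

lemma ereal_coe_sum' (f : Fin m → ℝ) :
    ((∑ i, f i : ℝ) : EReal) = ∑ i, ((f i : ℝ) : EReal) :=
  map_sum (⟨⟨Real.toEReal, EReal.coe_zero⟩, EReal.coe_add⟩ : ℝ →+ EReal) f univ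

end Helpers6

/-- Let `ρ ∈ [0,ρ₀]`, let `d* ∈ X` be a minimizer of `J(·,ρ)` over `X`, and let
`u*` be a dual-feasible point with `D(u*,ρ) = J(d*,ρ)` (strong duality).  Then the
complementarity measure vanishes: `χ(d*,u*) = 0`. -/
theorem statement_6
    (n m mbar : ℕ) (hn : 1 ≤ n) (hmm : mbar ≤ m)
    (g : Evec n) (a : Fin m → Evec n) (ha : ∀ i, a i ≠ 0) (b : Fin m → ℝ)
    (Hf H0 : Matrix (Fin n) (Fin n) ℝ) (hHf : Hf.IsHermitian) (hH0 : H0.IsHermitian)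
    (ρ₀ : ℝ) (hρ₀ : 0 < ρ₀)
    (hpos : ∀ ρ ∈ Set.Icc (0:ℝ) ρ₀, (Hmat Hf H0 ρ).PosDef)
    (X : Set (Evec n)) (hXne : X.Nonempty) (hXcp : IsCompact X)
    (hXcv : Convex ℝ X) (hX0 : (0 : Evec n) ∈ X)
    (ρ : ℝ) (hρ : ρ ∈ Set.Icc (0:ℝ) ρ₀)
    (dstar : Evec n) (hdX : dstar ∈ X)
    (hmin : ∀ d ∈ X, Jval mbar g a b Hf H0 ρ dstar ≤ Jval mbar g a b Hf H0 ρ d)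
    (u0 : Evec n) (u : Fin m → Evec n) (um1 : Evec n)
    (hu : DualFeasible a u0 u um1)
    (hstrong : DvalE mbar g a b Hf H0 X ρ u0 u um1
        = ((Jval mbar g a b Hf H0 ρ dstar : ℝ) : EReal)) :
    chiMeas mbar a b dstar u = 0 := by
  classical
  have hH : (Hmat Hf H0 ρ).PosDef := hpos ρ hρ
  have hapos : ∀ i, (0:ℝ) < ‖a i‖ := fun i => norm_pos_iff.2 (ha i)
  have habar : ∀ i, ‖abar a i‖ = 1 := fun i => by
    rw [abar, norm_smul, norm_inv, norm_norm, inv_mul_cancel₀ (hapos i).ne']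
  have hee : ∀ i, ⟪abar a i, abar a i⟫ = (1:ℝ) := fun i => by
    rw [real_inner_self_eq_norm_sq, habar]; norm_num
  set s : Fin m → ℝ := fun i => ⟪abar a i, dstar⟫ + bbar a b i with hsdef
  set t : Fin m → ℝ := fun i => if (i:ℕ) < mbar then s i else max (s i) 0 with htdef
  set z : Fin m → Evec n := fun i => dstar - t i • abar a i with hzdef
  have hti : ∀ i, t i = if (i:ℕ) < mbar then s i else max (s i) 0 := fun _ => rfl
  have hsi : ∀ i, s i = ⟪abar a i, dstar⟫ + bbar a b i := fun _ => rfl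
  have hzi : ∀ i, z i = dstar - t i • abar a i := fun _ => rfl
  have hzmem : ∀ i, z i ∈ Cset mbar a b i := by
    intro i
    have hz2 : ⟪abar a i, z i⟫ + bbar a b i = s i - t i := by
      rw [hzi i, inner_sub_right, real_inner_smul_right, hee i, mul_one, hsi i]; ring
    rw [Cset]
    split_ifs with hcase
    · show ⟪abar a i, z i⟫ + bbar a b i = 0
      rw [hz2, hti i, if_pos hcase]; ring
    · show ⟪abar a i, z i⟫ + bbar a b i ≤ 0
      rw [hz2, hti i, if_neg hcase]
      have := le_max_left (s i) 0
      linarith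
  have hsupp : ∀ i, ((⟪u i, z i⟫ : ℝ) : EReal) ≤ suppFnE (u i) (Cset mbar a b i) := by
    intro i
    exact le_iSup₂ (f := fun w (_ : w ∈ Cset mbar a b i) => ((⟪u i, w⟫ : ℝ) : EReal))
      (z i) (hzmem i)
  have hsuppX : ((⟪um1, dstar⟫ : ℝ) : EReal) ≤ suppFnE um1 X :=
    le_iSup₂ (f := fun w (_ : w ∈ X) => ((⟪um1, w⟫ : ℝ) : EReal)) dstar hdX
  have hsum : ((∑ i, ‖a i‖ * ⟪u i, z i⟫ : ℝ) : EReal)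
      ≤ ∑ i, (‖a i‖ : EReal) * suppFnE (u i) (Cset mbar a b i) := by
    rw [ereal_coe_sum']
    exact Finset.sum_le_sum fun i _ => ereal_mul_le' (hapos i) (hsupp i)
  have hbound : DvalE mbar g a b Hf H0 X ρ u0 u um1
      ≤ (((-(1/2) * ⟪u0 - ρ • g, matApply (Hmat Hf H0 ρ)⁻¹ (u0 - ρ • g)⟫
          - ∑ i, ‖a i‖ * ⟪u i, z i⟫ - ⟪um1, dstar⟫ : ℝ)) : EReal) := by
    rw [DvalE, EReal.coe_sub, EReal.coe_sub]
    exact EReal.sub_le_sub (EReal.sub_le_sub le_rfl hsum) hsuppX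
  have hreal : Jval mbar g a b Hf H0 ρ dstar
      ≤ -(1/2) * ⟪u0 - ρ • g, matApply (Hmat Hf H0 ρ)⁻¹ (u0 - ρ • g)⟫
          - (∑ i, ‖a i‖ * ⟪u i, z i⟫) - ⟪um1, dstar⟫ := by
    rw [← EReal.coe_le_coe_iff, ← hstrong]
    exact hbound
  have hquad := quad_ineq' (Hmat Hf H0 ρ) hH (u0 - ρ • g) dstar
  have hgd : ⟪u0 - ρ • g, dstar⟫ = ⟪u0, dstar⟫ - ρ * ⟪g, dstar⟫ := by
    rw [inner_sub_left, real_inner_smul_left]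
  have hfeas : ⟪u0, dstar⟫ + (∑ i, ‖a i‖ * ⟪u i, dstar⟫) + ⟪um1, dstar⟫ = 0 := by
    have h := congrArg (fun v : Evec n => (⟪v, dstar⟫ : ℝ)) hu.1
    simpa [inner_add_left, sum_inner, real_inner_smul_left, Finset.mul_sum, mul_assoc] using h
  have hiz : ∀ i, ⟪u i, z i⟫ = ⟪u i, dstar⟫ - t i * zeta a u i := by
    intro i
    rw [hzi i, inner_sub_right, real_inner_smul_right, zeta]
  have hsz : ∑ i, ‖a i‖ * ⟪u i, z i⟫
      = (∑ i, ‖a i‖ * ⟪u i, dstar⟫) - ∑ i, ‖a i‖ * (t i * zeta a u i) := by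
    rw [← Finset.sum_sub_distrib]
    exact Finset.sum_congr rfl fun i _ => by rw [hiz i]; ring
  have hstar : lpen mbar a b dstar ≤ ∑ i, ‖a i‖ * (t i * zeta a u i) := by
    rw [Jval, hsz] at hreal
    linarith [hquad, hgd, hfeas, hreal]
  have hab : ∀ i, ⟪a i, dstar⟫ + b i = ‖a i‖ * s i := by
    intro i
    rw [hsi i, abar, bbar, real_inner_smul_left]
    field_simp
    rw [mul_div_assoc, div_self (hapos i).ne', mul_one]
  have hdist_h : ∀ i : Fin m, (i:ℕ) < mbar →
      Metric.infDist dstar (Cset mbar a b i) = |s i| := by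
    intro i h
    rw [Cset, if_pos h, hsi i]
    exact infDist_hyper' (abar a i) dstar (habar i) (bbar a b i)
  have hdist_l : ∀ i : Fin m, ¬((i:ℕ) < mbar) →
      Metric.infDist dstar (Cset mbar a b i) = max (s i) 0 := by
    intro i h
    rw [Cset, if_neg h, hsi i]
    exact infDist_half' (abar a i) dstar (habar i) (bbar a b i)
  have hzeta : ∀ i, |zeta a u i| ≤ 1 := by
    intro i
    calc |zeta a u i| ≤ ‖u i‖ * ‖abar a i‖ := abs_real_inner_le_norm _ _
      _ ≤ 1 := by rw [habar i, mul_one]; exact hu.2 i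
  have hchi : chiMeas mbar a b dstar u
      = lpen mbar a b dstar - ∑ i, ‖a i‖ * (t i * zeta a u i) := by
    rw [chiMeas, lpen, ← Finset.sum_sub_distrib]
    refine Finset.sum_congr rfl fun i _ => ?_
    rw [hab i, ← hsi i]
    by_cases hcase : (i:ℕ) < mbar
    · rw [if_pos hcase, if_pos hcase, hdist_h i hcase, hti i, if_pos hcase]
      rcases lt_trichotomy (s i) 0 with hv | hv | hv
      · rw [if_neg (by linarith), if_pos hv, abs_of_neg hv,
          abs_of_neg (by nlinarith [hapos i] : ‖a i‖ * s i < 0)]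
        ring
      · simp [hv]
      · rw [if_pos hv, abs_of_pos hv,
          abs_of_pos (by exact mul_pos (hapos i) hv : (0:ℝ) < ‖a i‖ * s i)]
        ring
    · rw [if_neg hcase, if_neg hcase, hti i, if_neg hcase]
      by_cases hv : 0 < s i
      · rw [if_pos hv, hdist_l i hcase, max_eq_left hv.le,
          max_eq_left (by exact mul_nonneg (hapos i).le hv.le : (0:ℝ) ≤ ‖a i‖ * s i)]
        ring
      · push_neg at hv
        rw [if_neg (not_lt.2 hv),
          max_eq_right (by nlinarith [hapos i] : ‖a i‖ * s i ≤ 0),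
          max_eq_right hv]
        ring
  have hnonneg : 0 ≤ chiMeas mbar a b dstar u := by
    rw [chiMeas]
    refine Finset.sum_nonneg fun i _ => ?_
    obtain ⟨hl, hr⟩ := abs_le.1 (hzeta i)
    have h2 : (0:ℝ) ≤ ‖a i‖ * Metric.infDist dstar (Cset mbar a b i) :=
      mul_nonneg (norm_nonneg _) Metric.infDist_nonneg
    split_ifs <;>
      first
        | exact mul_nonneg (by linarith) h2
        | exact le_refl 0
  have hle : chiMeas mbar a b dstar u ≤ 0 := by rw [hchi]; linarith [hstar]
  linarith [hnonneg, hle]
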